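/- Let W > 0 and 0 < d₁ < d₂. Then σ_{d₁} majorizes σ_{d₂}; explicitly, with σ_d*(f) = (π d / arctan(πW/d)) · 1/(d² + (πW f)²), one has ∫₀^s σ_{d₁}*(f) df ≥ ∫₀^s σ_{d₂}*(f) df for all s ∈ [0,1) and ∫₀^1 σ_{d₁}*(f) df = ∫₀^1 σ_{d₂}*(f) df = 1/W. -/

import Mathlib

open MeasureTheory Real Set

/-- Decreasing rearrangement of the attenuated OU spectral fading variance. -/
noncomputable def sigmaDStar (d W f : ℝ) : ℝ :=
  (π * d / Real.arctan (π * W / d)) * (1 / (d ^ 2 + (π * W * f) ^ 2))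

lemma arctan_pos' {x : ℝ} (hx : 0 < x) : 0 < Real.arctan x := by
  have := Real.arctan_strictMono hx
  simpa using this

lemma arctan_nonneg' {x : ℝ} (hx : 0 ≤ x) : 0 ≤ Real.arctan x := by
  have := Real.arctan_strictMono.monotone hx
  simpa using this

lemma arctan_le_self' {x : ℝ} (hx : 0 ≤ x) : Real.arctan x ≤ x := by
  have hmono : Monotone (fun x : ℝ => x - Real.arctan x) := by
    apply monotone_of_deriv_nonneg
    · exact differentiable_id.sub (Real.differentiable_arctan)
    · intro x
      have h : HasDerivAt (fun x : ℝ => x - Real.arctan x) (1 - 1 / (1 + x ^ 2)) x :=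
        (hasDerivAt_id x).sub (Real.hasDerivAt_arctan x)
      rw [h.deriv]
      have h1 : (1 : ℝ) ≤ 1 + x ^ 2 := by nlinarith [sq_nonneg x]
      have : 1 / (1 + x ^ 2) ≤ 1 := by
        rw [div_le_one (by positivity)]; exact h1
      linarith
  have := hmono hx
  simpa [Real.arctan_zero] using this

lemma phi_mono {u v : ℝ} (hu : 0 < u) (huv : u ≤ v) :
    (u + u⁻¹) * Real.arctan u ≤ (v + v⁻¹) * Real.arctan v := by
  have hmono : MonotoneOn (fun x : ℝ => (x + x⁻¹) * Real.arctan x) (Ioi 0) := by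
    have hderiv : ∀ x ∈ interior (Ioi (0:ℝ)), HasDerivAt
        (fun x : ℝ => (x + x⁻¹) * Real.arctan x)
        ((1 + -(x ^ 2)⁻¹) * Real.arctan x + (x + x⁻¹) * (1 / (1 + x ^ 2))) x := by
      intro x hx
      rw [interior_Ioi, mem_Ioi] at hx
      exact ((hasDerivAt_id x).add (hasDerivAt_inv (ne_of_gt hx))).mul (Real.hasDerivAt_arctan x)
    apply monotoneOn_of_deriv_nonneg (convex_Ioi 0)
    · intro x hx
      exact ((hderiv x (by rwa [interior_Ioi])).continuousAt).continuousWithinAt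
    · intro x hx
      exact (hderiv x hx).differentiableAt.differentiableWithinAt
    · intro x hx
      rw [(hderiv x hx).deriv]
      rw [interior_Ioi, mem_Ioi] at hx
      have hA0 : 0 ≤ Real.arctan x := arctan_nonneg' hx.le
      have hAx : Real.arctan x ≤ x := arctan_le_self' hx.le
      have hx2 : (0:ℝ) < 1 + x ^ 2 := by positivity
      have hx0 : x ≠ 0 := ne_of_gt hx
      have key : 0 ≤ (x ^ 2 - 1) * Real.arctan x * (1 + x ^ 2) + x * (1 + x ^ 2) := by
        rcases le_or_gt x 1 with h1 | h1
        · have hx2' : (0:ℝ) ≤ 1 - x ^ 2 := by nlinarith [mul_le_mul_of_nonneg_left h1 hx.le]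
          have hfac : (0:ℝ) ≤ (1 - x ^ 2) * (1 + x ^ 2) := mul_nonneg hx2' hx2.le
          have h2 : (1 - x ^ 2) * (1 + x ^ 2) * Real.arctan x ≤ (1 - x ^ 2) * (1 + x ^ 2) * x :=
            mul_le_mul_of_nonneg_left hAx hfac
          nlinarith [h2, pow_pos hx 3, pow_pos hx 5]
        · nlinarith [mul_nonneg (mul_nonneg (by nlinarith : (0:ℝ) ≤ x ^ 2 - 1) hA0) hx2.le]
      have heq : (1 + -(x ^ 2)⁻¹) * Real.arctan x + (x + x⁻¹) * (1 / (1 + x ^ 2))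
          = ((x ^ 2 - 1) * Real.arctan x * (1 + x ^ 2) + x * (1 + x ^ 2))
            / (x ^ 2 * (1 + x ^ 2)) := by
        rw [eq_div_iff (by positivity : (0:ℝ) < x ^ 2 * (1 + x ^ 2)).ne']
        field_simp
        ring
      rw [heq]
      positivity
  exact hmono (mem_Ioi.mpr hu) (mem_Ioi.mpr (lt_of_lt_of_le hu huv)) huv

lemma phi_ineq {x s : ℝ} (hx : 0 < x) (hs0 : 0 ≤ s) (hs1 : s ≤ 1) :
    (1 + (x * s) ^ 2) * Real.arctan (x * s) ≤ s * (1 + x ^ 2) * Real.arctan x := by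
  rcases eq_or_lt_of_le hs0 with rfl | hs
  · simp
  · have hxs : 0 < x * s := mul_pos hx hs
    have hxs_le : x * s ≤ x := by nlinarith
    have h := phi_mono hxs hxs_le
    have h2 := mul_le_mul_of_nonneg_left h hxs.le
    have e1 : x * s * ((x * s + (x * s)⁻¹) * Real.arctan (x * s))
        = (1 + (x * s) ^ 2) * Real.arctan (x * s) := by
      field_simp
      ring
    have e2 : x * s * ((x + x⁻¹) * Real.arctan x) = s * (1 + x ^ 2) * Real.arctan x := by
      field_simp
      ring
    rw [e1, e2] at h2
    exact h2

lemma key_ineq {s a b : ℝ} (hs0 : 0 ≤ s) (hs1 : s ≤ 1) (hb : 0 < b) (hba : b ≤ a) :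
    Real.arctan (b * s) / Real.arctan b ≤ Real.arctan (a * s) / Real.arctan a := by
  have hmono : MonotoneOn (fun x : ℝ => Real.arctan (x * s) / Real.arctan x) (Ioi 0) := by
    have hderiv : ∀ x ∈ interior (Ioi (0:ℝ)), HasDerivAt
        (fun x : ℝ => Real.arctan (x * s) / Real.arctan x)
        ((1 / (1 + (x * s) ^ 2) * s * Real.arctan x
          - Real.arctan (x * s) * (1 / (1 + x ^ 2))) / (Real.arctan x) ^ 2) x := by
      intro x hx
      rw [interior_Ioi, mem_Ioi] at hx
      have hlin : HasDerivAt (fun y : ℝ => y * s) s x := by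
        simpa using (hasDerivAt_id x).mul_const s
      have hN : HasDerivAt (fun x : ℝ => Real.arctan (x * s)) (1 / (1 + (x * s) ^ 2) * s) x :=
        (Real.hasDerivAt_arctan (x * s)).comp (h := fun y : ℝ => y * s) x hlin
      exact hN.div (Real.hasDerivAt_arctan x) (ne_of_gt (arctan_pos' hx))
    apply monotoneOn_of_deriv_nonneg (convex_Ioi 0)
    · intro x hx
      exact ((hderiv x (by rwa [interior_Ioi])).continuousAt).continuousWithinAt
    · intro x hx
      exact (hderiv x hx).differentiableAt.differentiableWithinAt
    · intro x hx
      rw [(hderiv x hx).deriv]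
      rw [interior_Ioi, mem_Ioi] at hx
      apply div_nonneg _ (sq_nonneg _)
      rw [sub_nonneg]
      have h := phi_ineq hx hs0 hs1
      have hx2 : (0:ℝ) < 1 + x ^ 2 := by positivity
      have hxs2 : (0:ℝ) < 1 + (x * s) ^ 2 := by positivity
      have e1 : Real.arctan (x * s) * (1 / (1 + x ^ 2))
          = Real.arctan (x * s) / (1 + x ^ 2) := by ring
      have e2 : 1 / (1 + (x * s) ^ 2) * s * Real.arctan x
          = s * Real.arctan x / (1 + (x * s) ^ 2) := by ring
      rw [e1, e2, div_le_div_iff₀ hx2 hxs2]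
      nlinarith [h]
  exact hmono (mem_Ioi.mpr hb) (mem_Ioi.mpr (lt_of_lt_of_le hb hba)) hba

lemma integral_sigma {d W s : ℝ} (hd : 0 < d) (hW : 0 < W) (hs : 0 ≤ s) :
    ∫ f in Ioo (0 : ℝ) s, sigmaDStar d W f
      = Real.arctan (π * W / d * s) / (W * Real.arctan (π * W / d)) := by
  have hk : 0 < π * W / d := by positivity
  have hA : 0 < Real.arctan (π * W / d) := arctan_pos' hk
  rw [← MeasureTheory.integral_Ioc_eq_integral_Ioo, ← intervalIntegral.integral_of_le hs]
  have hderiv : ∀ x ∈ uIcc (0:ℝ) s, HasDerivAt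
      (fun f : ℝ => Real.arctan (π * W / d * f) / (W * Real.arctan (π * W / d)))
      (sigmaDStar d W x) x := by
    intro x _
    have hlin : HasDerivAt (fun f : ℝ => π * W / d * f) (π * W / d) x := by
      simpa using (hasDerivAt_id x).const_mul (π * W / d)
    have h1 : HasDerivAt (fun f : ℝ => Real.arctan (π * W / d * f))
        (1 / (1 + (π * W / d * x) ^ 2) * (π * W / d)) x :=
      (Real.hasDerivAt_arctan (π * W / d * x)).comp x hlin
    have h2 := h1.div_const (W * Real.arctan (π * W / d))
    convert h2 using 1
    all_goals try rfl
    unfold sigmaDStar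
    have hd2 : (0:ℝ) < d ^ 2 + (π * W * x) ^ 2 := by positivity
    field_simp
  rw [intervalIntegral.integral_eq_sub_of_hasDerivAt hderiv]
  · simp
  · apply Continuous.intervalIntegrable
    unfold sigmaDStar
    apply continuous_const.mul
    apply Continuous.div continuous_const
    · fun_prop
    · intro x; positivity

/-- For `0 < d₁ < d₂`, `σ_{d₁}` majorizes `σ_{d₂}`: the partial integrals of the decreasing
rearrangements are ordered and both total integrals equal `1/W`. -/
theorem sigmaD_majorizes (W d₁ d₂ : ℝ) (hW : 0 < W) (hd₁ : 0 < d₁) (hd : d₁ < d₂) :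
    (∀ s ∈ Ico (0 : ℝ) 1,
        (∫ f in Ioo (0 : ℝ) s, sigmaDStar d₂ W f) ≤ ∫ f in Ioo (0 : ℝ) s, sigmaDStar d₁ W f) ∧
      (∫ f in Ioo (0 : ℝ) 1, sigmaDStar d₁ W f) = 1 / W ∧
      (∫ f in Ioo (0 : ℝ) 1, sigmaDStar d₂ W f) = 1 / W := by
  have hd₂ : 0 < d₂ := hd₁.trans hd
  have ha : 0 < π * W / d₁ := by positivity
  have hb : 0 < π * W / d₂ := by positivity
  have hba : π * W / d₂ ≤ π * W / d₁ :=
    div_le_div_of_nonneg_left (by positivity) hd₁ hd.le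
  have htotal : ∀ d : ℝ, 0 < d → (∫ f in Ioo (0 : ℝ) 1, sigmaDStar d W f) = 1 / W := by
    intro d hdp
    rw [integral_sigma hdp hW zero_le_one]
    have hA : 0 < Real.arctan (π * W / d) := arctan_pos' (by positivity)
    rw [mul_one]
    field_simp
  refine ⟨?_, htotal d₁ hd₁, htotal d₂ hd₂⟩
  intro s hs
  obtain ⟨hs0, hs1⟩ := hs
  rw [integral_sigma hd₁ hW hs0, integral_sigma hd₂ hW hs0]
  have h := key_ineq hs0 hs1.le hb hba
  have hA1 : 0 < Real.arctan (π * W / d₁) := arctan_pos' ha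
  have hA2 : 0 < Real.arctan (π * W / d₂) := arctan_pos' hb
  calc Real.arctan (π * W / d₂ * s) / (W * Real.arctan (π * W / d₂))
      = (Real.arctan (π * W / d₂ * s) / Real.arctan (π * W / d₂)) / W := by
        rw [div_div, mul_comm W]
    _ ≤ (Real.arctan (π * W / d₁ * s) / Real.arctan (π * W / d₁)) / W := by gcongr
    _ = Real.arctan (π * W / d₁ * s) / (W * Real.arctan (π * W / d₁)) := by
        rw [div_div, mul_comm W]
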